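/- arXiv:1912.08482 — 6 statements merged into one kernel-verified Lean document; each statement's English description precedes it below -/
import Mathlib

section
/- Let B be a set with at least 3 elements and let G be a primitive group of permutations of B. Let a be a nonempty symmetric binary relation on B that is disjoint from the diagonal Δ and invariant under G. Then a∘a ≠ Δ, where ∘ denotes composition of relations. -/
/-- The diagonal relation on `B`, viewed as a set of pairs. -/
def diag (B : Type*) : Set (B × B) := {p | p.1 = p.2}

/-- Composition of binary relations given as sets of pairs. -/
def RelComp {B : Type*} (r s : Set (B × B)) : Set (B × B) :=
  {p | ∃ y, (p.1, y) ∈ r ∧ (y, p.2) ∈ s}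

/-- A binary relation (set of pairs) is invariant under a group `G` of permutations of `B`. -/
def Invariant {B : Type*} (G : Subgroup (Equiv.Perm B)) (r : Set (B × B)) : Prop :=
  ∀ g ∈ G, ∀ p ∈ r, (g p.1, g p.2) ∈ r

/-- A set of pairs is an equivalence relation. -/
def IsEquivRel {B : Type*} (r : Set (B × B)) : Prop :=
  (∀ x, (x, x) ∈ r) ∧ (∀ x y, (x, y) ∈ r → (y, x) ∈ r) ∧
    (∀ x y z, (x, y) ∈ r → (y, z) ∈ r → (x, z) ∈ r)

/-- A group of permutations of `B` is primitive if the only `G`-invariant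
equivalence relations on `B` are the diagonal and `B × B`. -/
def Primitive {B : Type*} (G : Subgroup (Equiv.Perm B)) : Prop :=
  ∀ r : Set (B × B), IsEquivRel r → Invariant G r → r = diag B ∨ r = Set.univ

/-- if `G` is primitive on a set with at least 3 elements and `a`
is a nonempty symmetric `G`-invariant relation disjoint from the diagonal,
then `a ∘ a ≠ Δ`. -/
theorem stmt1 {B : Type*} (h3 : ∃ x y z : B, x ≠ y ∧ y ≠ z ∧ x ≠ z)
    (G : Subgroup (Equiv.Perm B)) (hG : Primitive G)
    (a : Set (B × B)) (ha_ne : a.Nonempty)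
    (ha_symm : ∀ x y : B, (x, y) ∈ a → (y, x) ∈ a)
    (ha_disj : a ∩ diag B = ∅)
    (ha_inv : Invariant G a) :
    RelComp a a ≠ diag B := by
  intro hcomp
  set r : Set (B × B) := a ∪ diag B with hr
  have hequiv : IsEquivRel r := by
    refine ⟨fun x => Or.inr rfl, fun x y h => ?_, fun x y z hxy hyz => ?_⟩
    · rcases h with h | h
      · exact Or.inl (ha_symm x y h)
      · exact Or.inr h.symm
    · rcases hxy with hxy | hxy
      · rcases hyz with hyz | hyz
        · have : (x, z) ∈ RelComp a a := ⟨y, hxy, hyz⟩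
          rw [hcomp] at this
          exact Or.inr this
        · have : y = z := hyz
          exact Or.inl (this ▸ hxy)
      · have : x = y := hxy
        exact this ▸ hyz
  have hinv : Invariant G r := by
    intro g hg p hp
    rcases hp with hp | hp
    · exact Or.inl (ha_inv g hg p hp)
    · exact Or.inr (congrArg g hp)
  rcases hG r hequiv hinv with h | h
  · obtain ⟨p, hp⟩ := ha_ne
    have : p ∈ r := Or.inl hp
    rw [h] at this
    have : p ∈ a ∩ diag B := ⟨hp, this⟩
    rw [ha_disj] at this
    exact this
  · obtain ⟨x, y, z, hxy, hyz, hxz⟩ := h3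
    have hxya : (x, y) ∈ a := by
      have : ((x, y) : B × B) ∈ r := h ▸ Set.mem_univ _
      rcases this with h' | h'
      · exact h'
      · exact absurd h' hxy
    have hyza : (y, z) ∈ a := by
      have : ((y, z) : B × B) ∈ r := h ▸ Set.mem_univ _
      rcases this with h' | h'
      · exact h'
      · exact absurd h' hyz
    have : (x, z) ∈ RelComp a a := ⟨y, hxya, hyza⟩
    rw [hcomp] at this
    exact hxz this
end

section
/- Let B be a set with at least 3 elements and let G be a primitive group of permutations of B such that the componentwise action of G on B×B has only finitely many orbits. Let a be a nonempty symmetric binary relation on B that is disjoint from the diagonal Δ and invariant under G. Then there exists k ≥ 1 such that for all x, y ∈ B there is an a-walk of length 2k from x to y. In particular, any two elements of B are joined by an a-walk of even length. -/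
def Walk {B : Type*} (a : Set (B × B)) (n : ℕ) (x y : B) : Prop :=
  ∃ b : ℕ → B, b 0 = x ∧ b n = y ∧ ∀ i < n, (b i, b (i + 1)) ∈ a

lemma walk_refl {B : Type*} (a : Set (B × B)) (x : B) : Walk a 0 x x :=
  ⟨fun _ => x, rfl, rfl, fun i hi => absurd hi (Nat.not_lt_zero i)⟩

lemma walk_trans {B : Type*} {a : Set (B × B)} {n m : ℕ} {x y z : B}
    (h1 : Walk a n x y) (h2 : Walk a m y z) : Walk a (n + m) x z := by
  obtain ⟨b, hb0, hbn, hb⟩ := h1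
  obtain ⟨c, hc0, hcm, hc⟩ := h2
  refine ⟨fun i => if i < n then b i else c (i - n), ?_, ?_, ?_⟩
  · by_cases h : 0 < n
    · simpa [h] using hb0
    · have hn : n = 0 := by omega
      subst hn
      simpa [hc0] using hbn ▸ hb0
  · have : ¬ (n + m < n) := by omega
    simp only [this, if_false, Nat.add_sub_cancel_left, hcm]
  · intro i hi
    by_cases h1' : i + 1 < n
    · have h2' : i < n := by omega
      simp only [h1', h2', if_true]
      exact hb i (by omega)
    · by_cases h2' : i < n
      · have hin : i + 1 = n := by omega
        show (if i < n then b i else c (i - n), if i + 1 < n then b (i + 1) else c (i + 1 - n)) ∈ a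
        rw [if_pos h2', if_neg h1', hin, Nat.sub_self, hc0]
        have hb' := hb i (by omega)
        rwa [hin, hbn] at hb' 
      · have e : i + 1 - n = (i - n) + 1 := by omega
        simp only [h1', h2', if_false, e]
        exact hc (i - n) (by omega)

lemma walk_symm {B : Type*} {a : Set (B × B)} (hs : ∀ x y : B, (x, y) ∈ a → (y, x) ∈ a)
    {n : ℕ} {x y : B} (h : Walk a n x y) : Walk a n y x := by
  obtain ⟨b, hb0, hbn, hb⟩ := h
  refine ⟨fun i => b (n - i), by simpa using hbn, by simpa using hb0, ?_⟩
  intro i hi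
  have h1 : n - i = (n - (i + 1)) + 1 := by omega
  show (b (n - i), b (n - (i + 1))) ∈ a
  rw [h1]
  exact hs _ _ (hb (n - (i + 1)) (by omega))

lemma walk_map {B : Type*} {a : Set (B × B)} {g : Equiv.Perm B}
    (hg : ∀ p ∈ a, ((g p.1, g p.2) : B × B) ∈ a) {n : ℕ} {x y : B}
    (h : Walk a n x y) : Walk a n (g x) (g y) := by
  obtain ⟨b, hb0, hbn, hb⟩ := h
  exact ⟨fun i => g (b i), by simp [hb0], by simp [hbn],
    fun i hi => hg _ (hb i hi)⟩

lemma walk_ext2 {B : Type*} {a : Set (B × B)} (hs : ∀ x y : B, (x, y) ∈ a → (y, x) ∈ a)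
    {n : ℕ} {x y z : B} (h : Walk a n x y) (hz : (y, z) ∈ a) : Walk a (n + 2) x y := by
  obtain ⟨b, hb0, hbn, hb⟩ := h
  refine ⟨fun i => if i ≤ n then b i else if i = n + 1 then z else y, ?_, ?_, ?_⟩
  · simp [hb0]
  · simp only [show ¬ (n + 2 ≤ n) by omega, show ¬ (n + 2 = n + 1) by omega, if_false]
  · intro i hi
    by_cases h1 : i + 1 ≤ n
    · simp only [show i ≤ n by omega, h1, if_true]
      exact hb i (by omega)
    · by_cases h2 : i ≤ n
      · have hin : i = n := by omega
        subst hin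
        show (if i ≤ i then b i else _, if i + 1 ≤ i then b (i + 1) else if i + 1 = i + 1 then z else y) ∈ a
        rw [if_pos (le_refl i), if_neg (by omega : ¬ i + 1 ≤ i), if_pos rfl, hbn]
        exact hz
      · have hin : i = n + 1 := by omega
        subst hin
        show (if n + 1 ≤ n then b (n + 1) else if n + 1 = n + 1 then z else y,
          if n + 1 + 1 ≤ n then b (n + 1 + 1) else if n + 1 + 1 = n + 1 then z else y) ∈ a
        rw [if_neg (by omega : ¬ n + 1 ≤ n), if_pos rfl,
          if_neg (by omega : ¬ n + 1 + 1 ≤ n), if_neg (by omega : ¬ n + 1 + 1 = n + 1)]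
        exact hs _ _ hz



/-- if `G` is primitive on a set with at least 3 elements, has
finitely many orbits on pairs, and `a` is a nonempty symmetric `G`-invariant
relation disjoint from the diagonal, then there is a uniform even walk length
`2k` (with `k ≥ 1`) connecting any two elements; in particular any two elements
are joined by an `a`-walk of even length. -/

theorem stmt3 {B : Type*} (h3 : ∃ x y z : B, x ≠ y ∧ y ≠ z ∧ x ≠ z)
    (G : Subgroup (Equiv.Perm B)) (hG : Primitive G)
    (hfin : Set.Finite
      (Set.range fun p : B × B => {q : B × B | ∃ g ∈ G, (g p.1, g p.2) = q}))
    (a : Set (B × B)) (ha_ne : a.Nonempty)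
    (ha_symm : ∀ x y : B, (x, y) ∈ a → (y, x) ∈ a)
    (ha_disj : a ∩ diag B = ∅)
    (ha_inv : Invariant G a) :
    (∃ k : ℕ, 1 ≤ k ∧ ∀ x y : B, Walk a (2 * k) x y) ∧
      ∀ x y : B, ∃ m : ℕ, Walk a (2 * m) x y := by
  classical
  obtain ⟨x0, y0, z0, hxy, hyz, hxz⟩ := h3
  obtain ⟨⟨u, v⟩, huv⟩ := ha_ne
  have huv_ne : u ≠ v := by
    intro h
    have : ((u, v) : B × B) ∈ a ∩ diag B := ⟨huv, h⟩
    rw [ha_disj] at this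
    exact this
  have hvu := ha_symm _ _ huv
  -- every element has an a-neighbor
  have hS : ∀ x : B, ∃ y, (x, y) ∈ a := by
    set S : Set B := {x | ∃ y, (x, y) ∈ a} with hSdef
    set r : Set (B × B) := {p | p.1 = p.2 ∨ (p.1 ∈ S ∧ p.2 ∈ S)} with hrdef
    have hr : IsEquivRel r := by
      refine ⟨fun x => Or.inl rfl, ?_, ?_⟩
      · rintro x y (h | ⟨h1, h2⟩)
        · exact Or.inl h.symm
        · exact Or.inr ⟨h2, h1⟩
      · rintro x y z (h1 | ⟨ha1, hb1⟩) (h2 | ⟨ha2, hb2⟩)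
        · exact Or.inl (h1.trans h2)
        · exact Or.inr ⟨h1 ▸ ha2, hb2⟩
        · exact Or.inr ⟨ha1, h2 ▸ hb1⟩
        · exact Or.inr ⟨ha1, hb2⟩
    have hrinv : Invariant G r := by
      rintro g hg ⟨x, y⟩ (h | ⟨⟨x', hx'⟩, ⟨y', hy'⟩⟩)
      · exact Or.inl (by simp only at h ⊢; rw [h])
      · exact Or.inr ⟨⟨g x', ha_inv g hg (x, x') hx'⟩, ⟨g y', ha_inv g hg (y, y') hy'⟩⟩
    have huS : u ∈ S := ⟨v, huv⟩
    have hvS : v ∈ S := ⟨u, hvu⟩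
    rcases hG r hr hrinv with h | h
    · exfalso
      have : ((u, v) : B × B) ∈ r := Or.inr ⟨huS, hvS⟩
      rw [h] at this
      exact huv_ne this
    · intro x
      have : ((x, u) : B × B) ∈ r := h.symm ▸ Set.mem_univ _
      rcases this with h' | ⟨h', _⟩
      · have hxu : x = u := h'
        rw [hxu]; exact huS
      · exact h'
  -- every pair is joined by an even walk
  have heven : ∀ x y : B, ∃ m : ℕ, Walk a (2 * m) x y := by
    set E : Set (B × B) := {p | ∃ m : ℕ, Walk a (2 * m) p.1 p.2} with hEdef
    have hEeq : IsEquivRel E := by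
      refine ⟨fun x => ⟨0, walk_refl a x⟩, ?_, ?_⟩
      · rintro x y ⟨m, h⟩
        exact ⟨m, walk_symm ha_symm h⟩
      · rintro x y z ⟨m1, h1⟩ ⟨m2, h2⟩
        exact ⟨m1 + m2, by rw [Nat.mul_add]; exact walk_trans h1 h2⟩
    have hEinv : Invariant G E := by
      rintro g hg ⟨x, y⟩ ⟨m, h⟩
      exact ⟨m, walk_map (fun q hq => ha_inv g hg q hq) h⟩
    rcases hG E hEeq hEinv with hE | hE
    · exfalso
      set C : Set (B × B) := {p | ∃ n : ℕ, Walk a n p.1 p.2} with hCdef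
      have hCeq : IsEquivRel C := by
        refine ⟨fun x => ⟨0, walk_refl a x⟩, ?_, ?_⟩
        · rintro x y ⟨n, h⟩
          exact ⟨n, walk_symm ha_symm h⟩
        · rintro x y z ⟨n1, h1⟩ ⟨n2, h2⟩
          exact ⟨n1 + n2, walk_trans h1 h2⟩
      have hCinv : Invariant G C := by
        rintro g hg ⟨x, y⟩ ⟨n, h⟩
        exact ⟨n, walk_map (fun q hq => ha_inv g hg q hq) h⟩
      have huvC : ((u, v) : B × B) ∈ C := by
        refine ⟨1, fun i => if i = 0 then u else v, by simp, by simp, ?_⟩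
        intro i hi
        have : i = 0 := by omega
        simpa [this]
      rcases hG C hCeq hCinv with hC | hC
      · rw [hC] at huvC
        exact huv_ne huvC
      · -- any walk between distinct points has odd length
        have hodd : ∀ (n : ℕ) (x y : B), Walk a n x y → x ≠ y → n % 2 = 1 := by
          intro n x y hw hne
          by_contra h
          have hn : n = 2 * (n / 2) := by omega
          have : ((x, y) : B × B) ∈ E := ⟨n / 2, hn ▸ hw⟩
          rw [hE] at this
          exact hne this
        obtain ⟨n1, h1⟩ : ((x0, y0) : B × B) ∈ C := hC.symm ▸ Set.mem_univ _
        obtain ⟨n2, h2⟩ : ((y0, z0) : B × B) ∈ C := hC.symm ▸ Set.mem_univ _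
        have ho1 := hodd n1 x0 y0 h1 hxy
        have ho2 := hodd n2 y0 z0 h2 hyz
        have h12 : Walk a (n1 + n2) x0 z0 := walk_trans h1 h2
        have := hodd (n1 + n2) x0 z0 h12 hxz
        omega
    · intro x y
      exact (hE.symm ▸ Set.mem_univ _ : ((x, y) : B × B) ∈ E)
  -- walks extend by even amounts
  have hext : ∀ (j n : ℕ) (x y : B), Walk a n x y → Walk a (n + 2 * j) x y := by
    intro j
    induction j with
    | zero => intro n x y h; simpa using h
    | succ j ih =>
        intro n x y h
        obtain ⟨z, hz⟩ := hS y
        have := walk_ext2 ha_symm (ih n x y h) hz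
        rwa [show n + 2 * j + 2 = n + 2 * (j + 1) by ring] at this
  -- minimal even walk length, constant on orbits
  set m : B × B → ℕ := fun p => Nat.find (heven p.1 p.2) with hm
  set orb : B × B → Set (B × B) := fun p => {q : B × B | ∃ g ∈ G, (g p.1, g p.2) = q} with horb
  have half : ∀ p q : B × B, (∃ g ∈ G, ((g q.1, g q.2) : B × B) = p) → m p ≤ m q := by
    rintro p q ⟨g, hg, hgq⟩
    have hw : Walk a (2 * m q) q.1 q.2 := Nat.find_spec (heven q.1 q.2)
    have hw' := walk_map (fun r hr => ha_inv g hg r hr) hw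
    have e1 : g q.1 = p.1 := congrArg Prod.fst hgq
    have e2 : g q.2 = p.2 := congrArg Prod.snd hgq
    rw [e1, e2] at hw'
    exact Nat.find_min' (heven p.1 p.2) hw'
  have hself : ∀ p : B × B, p ∈ orb p := by
    intro p
    exact ⟨1, one_mem G, by simp⟩
  have hconst : ∀ p q : B × B, orb p = orb q → m p = m q := by
    intro p q hpq
    have h1 : p ∈ orb q := hpq ▸ hself p
    have h2 : q ∈ orb p := hpq.symm ▸ hself q
    exact le_antisymm (half p q h1) (half q p h2)
  have hrange : (Set.range m).Finite := by
    have hsub : Set.range m ⊆ (fun s => sInf (m '' {p | orb p = s})) '' Set.range orb := by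
      rintro n ⟨p, rfl⟩
      refine ⟨orb p, ⟨p, rfl⟩, ?_⟩
      have he : m '' {q | orb q = orb p} = {m p} := by
        apply Set.eq_singleton_iff_unique_mem.mpr
        refine ⟨⟨p, rfl, rfl⟩, ?_⟩
        rintro n ⟨q, hq, rfl⟩
        exact hconst q p hq
      show sInf (m '' {q | orb q = orb p}) = m p
      rw [he, csInf_singleton]
    exact (hfin.image _).subset hsub
  obtain ⟨K, hK⟩ := hrange.bddAbove
  refine ⟨⟨K + 1, by omega, ?_⟩, heven⟩
  intro x y
  have hw : Walk a (2 * m (x, y)) x y := Nat.find_spec (heven x y)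
  have hle : m (x, y) ≤ K := hK (Set.mem_range_self (x, y))
  have := hext (K + 1 - m (x, y)) _ _ _ hw
  rwa [show 2 * m (x, y) + 2 * (K + 1 - m (x, y)) = 2 * (K + 1) by omega] at this
end

section
/- Let a be a symmetric, irreflexive, triangle-free binary relation on a set B, and suppose there exists k ≥ 1 such that for all x, y ∈ B there is an a-walk of length 2k from x to y. Let Δ be the diagonal of B and R := {(x,y,z) ∈ B³ : (x,y) ∈ a ∪ Δ, (y,z) ∈ a ∪ Δ, (x,z) ∈ a}. Let n ≥ 1 and let f : Bⁿ → B be an operation that preserves R (if (xᵢ,yᵢ,zᵢ) ∈ R for all i ≤ n, then (f(x),f(y),f(z)) ∈ R) and is conservative on (a ∪ Δ)-edges (if (xᵢ,yᵢ) ∈ a ∪ Δ for all i ≤ n, then (f(x),f(y)) ∈ a ∪ Δ). Then f is {Δ,a}-canonical: for all x, y, u, v ∈ Bⁿ such that for every i ≤ n one has (xᵢ,yᵢ) ∈ a ∪ Δ, (uᵢ,vᵢ) ∈ a ∪ Δ, and ((xᵢ,yᵢ) ∈ a if and only if (uᵢ,vᵢ) ∈ a), it holds that (f(x),f(y)) ∈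 a if and only if (f(u),f(v)) ∈ a. -/
/-- let `a` be symmetric, irreflexive and triangle-free such that
for some `k ≥ 1` any two elements are joined by an `a`-walk of length `2k`.
Every operation `f : Bⁿ → B` (with `n ≥ 1`) that preserves the relation
`R = {(x,y,z) : (x,y) ∈ a ∪ Δ, (y,z) ∈ a ∪ Δ, (x,z) ∈ a}` and is conservative
on `(a ∪ Δ)`-edges is `{Δ,a}`-canonical. -/
theorem stmt7 {B : Type*} (a : Set (B × B))
    (ha_symm : ∀ x y : B, (x, y) ∈ a → (y, x) ∈ a)
    (ha_irr : ∀ x : B, (x, x) ∉ a)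
    (ha_tf : ∀ p q r : B, (p, q) ∈ a → (q, r) ∈ a → (p, r) ∉ a)
    (hwalk : ∃ k : ℕ, 1 ≤ k ∧ ∀ x y : B, Walk a (2 * k) x y)
    (n : ℕ) (hn : 1 ≤ n) (f : (Fin n → B) → B)
    (hR : ∀ x y z : Fin n → B,
      (∀ i, (x i, y i) ∈ a ∪ diag B ∧ (y i, z i) ∈ a ∪ diag B ∧ (x i, z i) ∈ a) →
      ((f x, f y) ∈ a ∪ diag B ∧ (f y, f z) ∈ a ∪ diag B ∧ (f x, f z) ∈ a))
    (hcons : ∀ x y : Fin n → B,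
      (∀ i, (x i, y i) ∈ a ∪ diag B) → (f x, f y) ∈ a ∪ diag B) :
    ∀ x y u v : Fin n → B,
      (∀ i, (x i, y i) ∈ a ∪ diag B ∧ (u i, v i) ∈ a ∪ diag B ∧
        ((x i, y i) ∈ a ↔ (u i, v i) ∈ a)) →
      ((f x, f y) ∈ a ↔ (f u, f v) ∈ a) := by
  classical
  obtain ⟨k, hk1, hwalk⟩ := hwalk
  intro x y u v h
  -- triangle flip lemma
  have flip : ∀ p q r : B, (p, q) ∈ a ∪ diag B → (q, r) ∈ a ∪ diag B → (p, r) ∈ a →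
      ((p, q) ∈ a ↔ (q, r) ∉ a) := by
    intro p q r hpq hqr hpr
    constructor
    · intro h1 h2
      exact ha_tf p q r h1 h2 hpr
    · intro h2
      rcases hqr with h3 | h3
      · exact absurd h3 h2
      · have h3' : q = r := h3
        rw [h3']; exact hpr
  have hSxy : ∀ i, (x i, y i) ∉ a → x i = y i := by
    intro i hi
    rcases (h i).1 with h' | h'
    · exact absurd h' hi
    · exact h'
  have hUV : ∀ i, (x i, y i) ∈ a → (u i, v i) ∈ a := fun i hi => ((h i).2.2).mp hi
  have hUVd : ∀ i, (x i, y i) ∉ a → u i = v i := by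
    intro i hi
    rcases (h i).2.1 with h' | h'
    · exact absurd ((h i).2.2.mpr h') hi
    · exact h'
  -- choose the coordinatewise walks
  have hex : ∀ i, ∃ e : ℕ → B, e 0 = x i ∧ e (2 * k + 1) = u i ∧
      (∀ s < 2 * k + 1, (e s, e (s + 1)) ∈ a) ∧ ((x i, y i) ∈ a → e 1 = y i) := by
    intro i
    by_cases hi : (x i, y i) ∈ a
    · obtain ⟨b, hb0, hbk, hbe⟩ := hwalk (y i) (u i)
      refine ⟨fun s => if s = 0 then x i else b (s - 1), by simp, ?_, ?_, ?_⟩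
      · have : (2 * k + 1 : ℕ) ≠ 0 := by omega
        simp only [this, if_neg, if_false]
        simpa using hbk
      · intro s hs
        by_cases hs0 : s = 0
        · subst hs0
          simpa [hb0] using hi
        · have h1 : s - 1 + 1 = s := by omega
          have := hbe (s - 1) (by omega)
          rw [h1] at this
          simpa [hs0] using this
      · intro _
        simpa using hb0
    · obtain ⟨b', hb'0, _, hb'e⟩ := hwalk (x i) (x i)
      have hnb : (x i, b' 1) ∈ a := by
        have := hb'e 0 (by omega)
        rwa [hb'0] at this
      obtain ⟨c, hc0, hck, hce⟩ := hwalk (b' 1) (u i)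
      refine ⟨fun s => if s = 0 then x i else c (s - 1), by simp, ?_, ?_, fun hxy => absurd hxy hi⟩
      · have : (2 * k + 1 : ℕ) ≠ 0 := by omega
        simp only [this, if_neg, if_false]
        simpa using hck
      · intro s hs
        by_cases hs0 : s = 0
        · subst hs0
          simpa [hc0] using hnb
        · have h1 : s - 1 + 1 = s := by omega
          have := hce (s - 1) (by omega)
          rw [h1] at this
          simpa [hs0] using this
  choose e he0 heM hedge he1 using hex
  -- the chain of tuples; 2*k+1 plays the role of M, total length 2M = 4k+2
  set w : ℕ → Fin n → B := fun t i =>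
    if (x i, y i) ∈ a then (if t = 4 * k + 3 then v i else e i ((t + 1) / 2))
    else e i (t / 2) with hw
  have hw0 : w 0 = x := by
    funext i
    by_cases hi : (x i, y i) ∈ a
    · simp only [hw, if_pos hi]
      rw [if_neg (by omega : (0:ℕ) ≠ 4 * k + 3)]
      simpa using he0 i
    · simp only [hw, if_neg hi]
      simpa using he0 i
  have hw1 : w 1 = y := by
    funext i
    by_cases hi : (x i, y i) ∈ a
    · simp only [hw, if_pos hi]
      rw [if_neg (by omega : (1:ℕ) ≠ 4 * k + 3)]
      simpa using he1 i hi
    · simp only [hw, if_neg hi]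
      have : (1:ℕ) / 2 = 0 := by omega
      rw [this, he0 i]
      exact hSxy i hi
  have hwm : w (4 * k + 2) = u := by
    funext i
    by_cases hi : (x i, y i) ∈ a
    · simp only [hw, if_pos hi]
      rw [if_neg (by omega : (4 * k + 2 : ℕ) ≠ 4 * k + 3)]
      have : (4 * k + 2 + 1) / 2 = 2 * k + 1 := by omega
      rw [this, heM i]
    · simp only [hw, if_neg hi]
      have : (4 * k + 2) / 2 = 2 * k + 1 := by omega
      rw [this, heM i]
  have hwm1 : w (4 * k + 3) = v := by
    funext i
    by_cases hi : (x i, y i) ∈ a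
    · simp [hw, if_pos hi]
    · simp only [hw, if_neg hi]
      have : (4 * k + 3) / 2 = 2 * k + 1 := by omega
      rw [this, heM i]
      exact hUVd i hi
  -- consecutive steps are (a ∪ Δ)-edges
  have C1 : ∀ t ≤ 4 * k + 2, ∀ i, (w t i, w (t + 1) i) ∈ a ∪ diag B := by
    intro t ht i
    by_cases hi : (x i, y i) ∈ a
    · simp only [hw, if_pos hi]
      rw [if_neg (by omega : t ≠ 4 * k + 3)]
      by_cases ht1 : t + 1 = 4 * k + 3
      · rw [if_pos ht1]
        have h1 : (t + 1) / 2 = 2 * k + 1 := by omega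
        rw [h1, heM i]
        exact Or.inl (hUV i hi)
      · rw [if_neg ht1]
        rcases Nat.even_or_odd t with ⟨j, hj⟩ | ⟨j, hj⟩
        · have h1 : (t + 1 + 1) / 2 = (t + 1) / 2 + 1 := by omega
          rw [h1]
          exact Or.inl (hedge i _ (by omega))
        · have h1 : (t + 1 + 1) / 2 = (t + 1) / 2 := by omega
          rw [h1]
          exact Or.inr rfl
    · simp only [hw, if_neg hi]
      rcases Nat.even_or_odd t with ⟨j, hj⟩ | ⟨j, hj⟩
      · have h1 : (t + 1) / 2 = t / 2 := by omega
        rw [h1]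
        exact Or.inr rfl
      · have h1 : (t + 1) / 2 = t / 2 + 1 := by omega
        rw [h1]
        exact Or.inl (hedge i _ (by omega))
  -- distance-two steps are a-edges
  have C2 : ∀ t < 4 * k + 2, ∀ i, (w t i, w (t + 2) i) ∈ a := by
    intro t ht i
    by_cases hi : (x i, y i) ∈ a
    · simp only [hw, if_pos hi]
      rw [if_neg (by omega : t ≠ 4 * k + 3)]
      by_cases ht2 : t + 2 = 4 * k + 3
      · rw [if_pos ht2]
        have h1 : (t + 1) / 2 = 2 * k + 1 := by omega
        rw [h1, heM i]
        exact hUV i hi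
      · rw [if_neg ht2]
        have h1 : (t + 2 + 1) / 2 = (t + 1) / 2 + 1 := by omega
        rw [h1]
        exact hedge i _ (by omega)
    · simp only [hw, if_neg hi]
      have h1 : (t + 2) / 2 = t / 2 + 1 := by omega
      rw [h1]
      exact hedge i _ (by omega)
  -- the flip at each step
  have key : ∀ t < 4 * k + 2,
      (((f (w t), f (w (t + 1))) ∈ a) ↔ ((f (w (t + 1)), f (w (t + 2))) ∉ a)) := by
    intro t ht
    have hr := hR (w t) (w (t + 1)) (w (t + 2))
      (fun i => ⟨C1 t (by omega) i, C1 (t + 1) (by omega) i, C2 t ht i⟩)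
    exact flip _ _ _ hr.1 hr.2.1 hr.2.2
  -- chain it up
  have chain : ∀ s ≤ 2 * k + 1,
      (((f (w 0), f (w 1)) ∈ a) ↔ ((f (w (2 * s)), f (w (2 * s + 1))) ∈ a)) := by
    intro s
    induction s with
    | zero => intro _; simp
    | succ s ih =>
      intro hs
      have h1 := key (2 * s) (by omega)
      have h2 := key (2 * s + 1) (by omega)
      have h0 := ih (by omega)
      have e1 : 2 * (s + 1) = 2 * s + 1 + 1 := by ring
      rw [e1]
      show (f (w 0), f (w 1)) ∈ a ↔ (f (w (2 * s + 1 + 1)), f (w (2 * s + 1 + 2))) ∈ a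
      rw [h0, h1]
      constructor
      · intro hna
        by_contra hc
        exact hna (h2.mpr hc)
      · intro ha hb
        exact (h2.mp hb) ha
  have final := chain (2 * k + 1) le_rfl
  have e1 : 2 * (2 * k + 1) = 4 * k + 2 := by ring
  rw [e1] at final
  have e2 : (4 * k + 2 + 1 : ℕ) = 4 * k + 3 := rfl
  rw [e2, hw0, hw1, hwm, hwm1] at final
  exact final
end

section
/- Let e be an equivalence relation on a set B with exactly two equivalence classes, at least one of which has at least two elements. Let Δ be the diagonal of B, a := e∖Δ, and n := (B×B)∖e. Then there is no ternary operation f : B³ → B that is edge-conservative with respect to the partition {Δ, a, n} of B×B (for all x, y ∈ B³, (f(x),f(y)) ∈ r₁ ∪ r₂ ∪ r₃, where rᵢ ∈ {Δ, a, n} is the part containing (xᵢ,yᵢ)) and cyclic modulo e (for all x₁, x₂, x₃ ∈ B, (f(x₁,x₂,x₃), f(x₃,x₁,x₂)) ∈ e). -/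
/-- Given an equivalence relation `e` on `B`, the set `B × B` is partitioned
into the diagonal `Δ`, the relation `a = e ∖ Δ`, and `n = (B × B) ∖ e`.
`SamePart e p q r s` says that `(r, s)` lies in the same part of this
partition as `(p, q)`. -/
def SamePart {B : Type*} (e : B → B → Prop) (p q r s : B) : Prop :=
  (p = q ∧ r = s) ∨ (p ≠ q ∧ e p q ∧ r ≠ s ∧ e r s) ∨ (¬ e p q ∧ ¬ e r s)

lemma spE {B : Type*} {e : B → B → Prop} (he : Equivalence e) {p q u v : B}
    (h : e p q) (hs : SamePart e p q u v) : e u v := by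
  rcases hs with ⟨_, rfl⟩ | ⟨_, _, _, h2⟩ | ⟨h1, _⟩
  · exact he.refl u
  · exact h2
  · exact absurd h h1

lemma spN {B : Type*} {e : B → B → Prop} (he : Equivalence e) {p q u v : B}
    (h : ¬ e p q) (hs : SamePart e p q u v) : ¬ e u v := by
  rcases hs with ⟨rfl, _⟩ | ⟨_, h1, _, _⟩ | ⟨_, h2⟩
  · exact absurd (he.refl p) h
  · exact absurd h1 h
  · exact h2

lemma spEq {B : Type*} {e : B → B → Prop} {p u v : B}
    (hs : SamePart e p p u v) (huv : e u v) : u = v := by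
  rcases hs with ⟨_, h⟩ | ⟨h, _⟩ | ⟨_, h⟩
  · exact h
  · exact absurd rfl h
  · exact absurd huv h

lemma spA {B : Type*} {e : B → B → Prop} {p q u v : B}
    (hne : p ≠ q) (h : e p q) (hs : SamePart e p q u v) : u ≠ v := by
  rcases hs with ⟨h1, _⟩ | ⟨_, _, h2, _⟩ | ⟨h1, _⟩
  · exact absurd h1 hne
  · exact h2
  · exact absurd h h1

/-- if `e` is an equivalence relation with exactly two classes,
one of which has at least two elements, then there is no ternary operation
`f : B³ → B` that is edge-conservative w.r.t. the partition `{Δ, e∖Δ, eᶜ}`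
and cyclic modulo `e`. -/
theorem stmt8 {B : Type*} (e : B → B → Prop) (he : Equivalence e)
    (htwo : ∃ c₁ c₂ : B, ¬ e c₁ c₂ ∧ ∀ x : B, e x c₁ ∨ e x c₂)
    (hbig : ∃ d₁ d₂ : B, d₁ ≠ d₂ ∧ e d₁ d₂) :
    ¬ ∃ f : B → B → B → B,
      (∀ x₁ x₂ x₃ y₁ y₂ y₃ : B,
        SamePart e x₁ y₁ (f x₁ x₂ x₃) (f y₁ y₂ y₃) ∨
        SamePart e x₂ y₂ (f x₁ x₂ x₃) (f y₁ y₂ y₃) ∨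
        SamePart e x₃ y₃ (f x₁ x₂ x₃) (f y₁ y₂ y₃)) ∧
      (∀ x₁ x₂ x₃ : B, e (f x₁ x₂ x₃) (f x₃ x₁ x₂)) := by
  rintro ⟨f, hcons, hcyc⟩
  obtain ⟨c₁, c₂, hc, hall⟩ := htwo
  obtain ⟨d₁, d₂, hne, hd⟩ := hbig
  obtain ⟨c, hc1⟩ : ∃ c, ¬ e c d₁ := by
    rcases hall d₁ with h | h
    · exact ⟨c₂, fun h' => hc (he.trans (he.symm h) (he.symm h'))⟩
    · exact ⟨c₁, fun h' => hc (he.trans h' h)⟩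
  -- basic inequivalences
  have hc2 : ¬ e c d₂ := fun h => hc1 (he.trans h (he.symm hd))
  have hd1c : ¬ e d₁ c := fun h => hc1 (he.symm h)
  have hd2c : ¬ e d₂ c := fun h => hc2 (he.symm h)
  set r := f c d₁ d₂ with hr
  set s := f d₁ c d₂ with hs
  set t := f d₂ d₁ c with ht
  set r' := f c d₂ d₁ with hr'
  set p := f c d₁ d₁ with hp
  -- Step A: e s r
  have hst : e s t := hcyc d₁ c d₂
  have htr' : e t r' := hcyc d₂ d₁ c
  have hr'r : e r' r := by
    rcases hcons c d₂ d₁ c d₁ d₂ with h | h | h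
    · exact spE he (he.refl c) h
    · exact spE he (he.symm hd) h
    · exact spE he hd h
  have hsr : e s r := he.trans hst (he.trans htr' hr'r)
  -- Step B: r = s
  have hrs : r = s := by
    rcases hcons c d₁ d₂ d₁ c d₂ with h | h | h
    · exact absurd (he.symm hsr) (spN he hc1 h)
    · exact absurd (he.symm hsr) (spN he hd1c h)
    · exact spEq h (he.symm hsr)
  -- Step C: r = t
  have htrr : e t r := he.trans htr' hr'r
  have hrt : r = t := by
    rcases hcons c d₁ d₂ d₂ d₁ c with h | h | h
    · exact absurd (he.symm htrr) (spN he hc2 h)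
    · exact spEq h (he.symm htrr)
    · exact absurd (he.symm htrr) (spN he hd2c h)
  -- Step D: e p r
  have hpr : e p r := by
    rcases hcons c d₁ d₁ c d₁ d₂ with h | h | h
    · exact spE he (he.refl c) h
    · exact spE he (he.refl d₁) h
    · exact spE he hd h
  -- Step E: p ≠ r
  have hpne : p ≠ r := by
    have hps : e p s := hrs ▸ hpr
    rcases hcons c d₁ d₁ d₁ c d₂ with h | h | h
    · exact absurd hps (spN he hc1 h)
    · exact absurd hps (spN he hd1c h)
    · exact fun hh => spA hne hd h (hh.trans hrs)
  -- Step F: p = r, contradiction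
  have hpt : e p t := hrt ▸ hpr
  rcases hcons c d₁ d₁ d₂ d₁ c with h | h | h
  · exact absurd hpt (spN he hc2 h)
  · exact hpne (hrt ▸ spEq h hpt)
  · exact absurd hpt (spN he hd1c h)
end

section
/- Let e be an equivalence relation on a set B with at least three equivalence classes, and let n := (B×B)∖e. Let p ≥ 3 be odd. Then there is no p-ary operation f : Bᵖ → B that preserves n (if (xᵢ,yᵢ) ∈ n for all i ≤ p, then (f(x),f(y)) ∈ n) and is cyclic modulo e (for all x₁, …, x_p ∈ B, (f(x₁,…,x_p), f(x_p,x₁,…,x_{p−1})) ∈ e). -/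
/-- if `e` is an equivalence relation on `B` with at least three
classes and `p ≥ 3` is odd, then there is no `p`-ary operation `f : Bᵖ → B`
that preserves the complement `n = (B × B) ∖ e` of `e` and is cyclic modulo
`e`.  Here the cyclic shift `(x₁,…,x_p) ↦ (x_p,x₁,…,x_{p−1})` is expressed via
the inverse of the rotation `finRotate p : i ↦ i + 1` of `Fin p`. -/
theorem stmt9 {B : Type*} (e : B → B → Prop) (he : Equivalence e)
    (hthree : ∃ c₁ c₂ c₃ : B, ¬ e c₁ c₂ ∧ ¬ e c₁ c₃ ∧ ¬ e c₂ c₃)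
    (p : ℕ) (hp : 3 ≤ p) (hodd : Odd p) :
    ¬ ∃ f : (Fin p → B) → B,
      (∀ x y : Fin p → B, (∀ i, ¬ e (x i) (y i)) → ¬ e (f x) (f y)) ∧
      (∀ x : Fin p → B, e (f x) (f fun i => x ((finRotate p).symm i))) := by
  obtain ⟨c₁, c₂, c₃, h12, h13, h23⟩ := hthree
  rintro ⟨f, hpres, hcyc⟩
  obtain ⟨n, rfl⟩ : ∃ n, p = n + 1 := ⟨p - 1, by omega⟩
  have hn2 : 2 ≤ n := by omega
  have hneven : n % 2 = 0 := by
    obtain ⟨k, hk⟩ := hodd; omega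
  set x : Fin (n + 1) → B := fun i =>
    if i.val = 0 then c₃ else if i.val % 2 = 1 then c₁ else c₂ with hx
  have hsymm : ∀ i : Fin (n + 1), (finRotate (n + 1)).symm i = i - 1 := by
    intro i
    rw [Equiv.symm_apply_eq, finRotate_succ_apply, sub_add_cancel]
  have key : ∀ i : Fin (n + 1), ¬ e (x i) (x (i - 1)) := by
    intro i
    have hval : ((i - 1 : Fin (n + 1)) : ℕ) = if i = 0 then n else i.val - 1 :=
      Fin.coe_sub_one i
    by_cases h0 : i = 0
    · have hi0 : i.val = 0 := by simp [h0]
      rw [if_pos h0] at hval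
      simp only [hx]
      rw [if_pos hi0, hval]
      have : ¬ n = 0 := by omega
      rw [if_neg this]
      have : ¬ n % 2 = 1 := by omega
      rw [if_neg this]
      exact fun h => h23 (he.symm h)
    · have hi0 : i.val ≠ 0 := fun h => h0 (Fin.ext h)
      rw [if_neg h0] at hval
      by_cases h1 : i.val = 1
      · simp only [hx]
        rw [if_neg hi0, if_pos (by omega : i.val % 2 = 1), hval, h1]
        simp only [if_pos rfl]
        exact h13
      · have hi2 : 2 ≤ i.val := by omega
        simp only [hx]
        rw [if_neg hi0, hval, if_neg (by omega : ¬ i.val - 1 = 0)]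
        rcases Nat.even_or_odd i.val with he2 | ho2
        · have hev : i.val % 2 = 0 := Nat.even_iff.mp he2
          have : ¬ i.val % 2 = 1 := by omega
          rw [if_neg this]
          have : (i.val - 1) % 2 = 1 := by omega
          rw [if_pos this]
          exact fun h => h12 (he.symm h)
        · have h2 : i.val % 2 = 1 := Nat.odd_iff.mp ho2
          rw [if_pos h2]
          have : ¬ (i.val - 1) % 2 = 1 := by omega
          rw [if_neg this]
          exact h12
  have hne := hpres x (fun i => x ((finRotate (n + 1)).symm i))
    (fun i => by show ¬ e (x i) (x ((finRotate (n + 1)).symm i)); rw [hsymm i]; exact key i)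
  exact hne (hcyc x)
end

section
/- Let a be a symmetric, irreflexive, triangle-free binary relation on a set B, let Δ be the diagonal of B, and let b := (B×B)∖(a ∪ Δ). Suppose there exist x, y, z ∈ B³ such that (x₁,y₁) ∈ a, (x₂,y₂) ∈ a, x₃ = y₃; y₁ = z₁, (y₂,z₂) ∈ a, (y₃,z₃) ∈ a; and (x₁,z₁) ∈ a, x₂ = z₂, (x₃,z₃) ∈ a. Suppose further there exist u, v, w ∈ B³ such that (u₁,v₁) ∈ a, (u₂,v₂) ∈ a, u₃ = v₃; v₁ = w₁, (v₂,w₂) ∈ a, (v₃,w₃) ∈ a; and (u₁,w₁) ∈ a, (u₂,w₂) ∈ b, (u₃,w₃) ∈ a. Then there is no ternary operation s : B³ → B with the following properties: (i) s is edge-conservative with respect to the partition {Δ, a, b} of B×B (for all p, q ∈ B³, (s(p),s(q)) ∈ r₁ ∪ r₂ ∪ r₃, where rᵢ ∈ {Δ, a, b} is the part containing (pᵢ,qᵢ)); (ii) s is {Δ,a}-canonical with behaviour s̄, i.e., there is a function s̄ : {0,1}³ → {0,1} such that for all p, q ∈ B³ with (pᵢ,qᵢ) ∈ a ∪ Δ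 for all i, one has (s(p),s(q)) ∈ a if and only if s̄(t₁,t₂,t₃) = 1, where tᵢ = 1 if (pᵢ,qᵢ) ∈ a and tᵢ = 0 if pᵢ = qᵢ; (iii) s̄ is cyclic: s̄(t₁,t₂,t₃) = s̄(t₃,t₁,t₂) for all t ∈ {0,1}³. -/
/-- Given two disjoint relations `a` and `b` (here: an atom `a` and
`b = (B × B) ∖ (a ∪ Δ)`), `SamePart3 a b p q r s` says that `(r, s)` lies in
the same part of the partition `{Δ, a, b}` of `B × B` as `(p, q)`. -/
def SamePart3 {B : Type*} (a b : Set (B × B)) (p q r s : B) : Prop :=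
  (p = q ∧ r = s) ∨ ((p, q) ∈ a ∧ (r, s) ∈ a) ∨ ((p, q) ∈ b ∧ (r, s) ∈ b)

/-- the combinatorial core of Theorem 6.8. Let `a` be symmetric,
irreflexive and triangle-free, `b := (a ∪ Δ)ᶜ`, and suppose the two triangle
configurations `x, y, z` (of types `(a,a,id)`, `(id,a,a)`, `(a,id,a)`) and
`u, v, w` (of types `(a,a,id)`, `(id,a,a)`, `(a,b,a)`) exist. Then there is no
ternary operation `s` that is edge-conservative w.r.t. `{Δ, a, b}` and
`{Δ,a}`-canonical with a cyclic behaviour. -/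
theorem stmt11 {B : Type*} (a : Set (B × B))
    (ha_symm : ∀ x y : B, (x, y) ∈ a → (y, x) ∈ a)
    (ha_irr : ∀ x : B, (x, x) ∉ a)
    (ha_tf : ∀ p q r : B, (p, q) ∈ a → (q, r) ∈ a → (p, r) ∉ a)
    (b : Set (B × B)) (hb : b = (a ∪ diag B)ᶜ)
    (x₁ x₂ x₃ y₁ y₂ y₃ z₁ z₂ z₃ : B)
    (hxy : (x₁, y₁) ∈ a ∧ (x₂, y₂) ∈ a ∧ x₃ = y₃)
    (hyz : y₁ = z₁ ∧ (y₂, z₂) ∈ a ∧ (y₃, z₃) ∈ a)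
    (hxz : (x₁, z₁) ∈ a ∧ x₂ = z₂ ∧ (x₃, z₃) ∈ a)
    (u₁ u₂ u₃ v₁ v₂ v₃ w₁ w₂ w₃ : B)
    (huv : (u₁, v₁) ∈ a ∧ (u₂, v₂) ∈ a ∧ u₃ = v₃)
    (hvw : v₁ = w₁ ∧ (v₂, w₂) ∈ a ∧ (v₃, w₃) ∈ a)
    (huw : (u₁, w₁) ∈ a ∧ (u₂, w₂) ∈ b ∧ (u₃, w₃) ∈ a) :
    ¬ ∃ s : B → B → B → B,
      (∀ p₁ p₂ p₃ q₁ q₂ q₃ : B,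
        SamePart3 a b p₁ q₁ (s p₁ p₂ p₃) (s q₁ q₂ q₃) ∨
        SamePart3 a b p₂ q₂ (s p₁ p₂ p₃) (s q₁ q₂ q₃) ∨
        SamePart3 a b p₃ q₃ (s p₁ p₂ p₃) (s q₁ q₂ q₃)) ∧
      ∃ sbar : Bool → Bool → Bool → Bool,
        (∀ (p₁ p₂ p₃ q₁ q₂ q₃ : B) (t₁ t₂ t₃ : Bool),
          (if t₁ = true then (p₁, q₁) ∈ a else p₁ = q₁) →
          (if t₂ = true then (p₂, q₂) ∈ a else p₂ = q₂) →
          (if t₃ = true then (p₃, q₃) ∈ a else p₃ = q₃) →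
          ((s p₁ p₂ p₃, s q₁ q₂ q₃) ∈ a ↔ sbar t₁ t₂ t₃ = true)) ∧
        (∀ t₁ t₂ t₃ : Bool, sbar t₁ t₂ t₃ = sbar t₃ t₁ t₂) := by
  rintro ⟨s, hcons, sbar, hcan, hcyc⟩
  obtain ⟨hxy1, hxy2, hxy3⟩ := hxy
  obtain ⟨hyz1, hyz2, hyz3⟩ := hyz
  obtain ⟨hxz1, hxz2, hxz3⟩ := hxz
  obtain ⟨huv1, huv2, huv3⟩ := huv
  obtain ⟨hvw1, hvw2, hvw3⟩ := hvw
  obtain ⟨huw1, huw2, huw3⟩ := huw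
  have hbmem : ∀ p q : B, (p, q) ∈ b ↔ (p, q) ∉ a ∧ p ≠ q := by
    subst hb
    intro p q
    simp [diag, Set.mem_compl_iff]
  -- behaviour on the three cyclic types
  have hxyc := hcan x₁ x₂ x₃ y₁ y₂ y₃ true true false
    (by simpa using hxy1) (by simpa using hxy2) (by simpa using hxy3)
  have hyzc := hcan y₁ y₂ y₃ z₁ z₂ z₃ false true true
    (by simpa using hyz1) (by simpa using hyz2) (by simpa using hyz3)
  have hxzc := hcan x₁ x₂ x₃ z₁ z₂ z₃ true false true
    (by simpa using hxz1) (by simpa using hxz2) (by simpa using hxz3)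
  have hc1 : sbar false true true = sbar true true false :=
    (hcyc false true true).trans (hcyc true false true)
  have hc2 : sbar true false true = sbar true true false :=
    hcyc true false true
  -- the common value must be false, by triangle-freeness
  have hval : sbar true true false = false := by
    by_contra h
    have h' : sbar true true false = true := by
      cases hh : sbar true true false with
      | false => exact absurd hh h
      | true => rfl
    have e1 : (s x₁ x₂ x₃, s y₁ y₂ y₃) ∈ a := hxyc.mpr h'
    have e2 : (s y₁ y₂ y₃, s z₁ z₂ z₃) ∈ a := hyzc.mpr (hc1.trans h')
    have e3 : (s x₁ x₂ x₃, s z₁ z₂ z₃) ∈ a := hxzc.mpr (hc2.trans h')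
    exact ha_tf _ _ _ e1 e2 e3
  -- hence on`u,v` and `v,w` the images are not a-related
  have huvc := hcan u₁ u₂ u₃ v₁ v₂ v₃ true true false
    (by simpa using huv1) (by simpa using huv2) (by simpa using huv3)
  have hvwc := hcan v₁ v₂ v₃ w₁ w₂ w₃ false true true
    (by simpa using hvw1) (by simpa using hvw2) (by simpa using hvw3)
  have huvna : (s u₁ u₂ u₃, s v₁ v₂ v₃) ∉ a := by
    intro h
    have := huvc.mp h
    rw [hval] at this
    exact Bool.false_ne_true this
  have hvwna : (s v₁ v₂ v₃, s w₁ w₂ w₃) ∉ a := by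
    intro h
    have := hvwc.mp h
    rw [hc1, hval] at this
    exact Bool.false_ne_true this
  -- from conservativity, `s u = s v` and `s v = s w`
  have hsuv : s u₁ u₂ u₃ = s v₁ v₂ v₃ := by
    rcases hcons u₁ u₂ u₃ v₁ v₂ v₃ with h | h | h <;>
      rcases h with ⟨h1, h2⟩ | ⟨h1, h2⟩ | ⟨h1, h2⟩
    · exact absurd (h1 ▸ huv1) (ha_irr _)
    · exact absurd h2 huvna
    · exact absurd ((hbmem _ _).mp h1).1 (not_not.mpr huv1)
    · exact absurd (h1 ▸ huv2) (ha_irr _)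
    · exact absurd h2 huvna
    · exact absurd ((hbmem _ _).mp h1).1 (not_not.mpr huv2)
    · exact h2
    · exact absurd (huv3 ▸ h1) (ha_irr _)
    · exact absurd huv3 ((hbmem _ _).mp h1).2
  have hsvw : s v₁ v₂ v₃ = s w₁ w₂ w₃ := by
    rcases hcons v₁ v₂ v₃ w₁ w₂ w₃ with h | h | h <;>
      rcases h with ⟨h1, h2⟩ | ⟨h1, h2⟩ | ⟨h1, h2⟩
    · exact h2
    · exact absurd (hvw1 ▸ h1) (ha_irr _)
    · exact absurd hvw1 ((hbmem _ _).mp h1).2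
    · exact absurd (h1 ▸ hvw2) (ha_irr _)
    · exact absurd h2 hvwna
    · exact absurd ((hbmem _ _).mp h1).1 (not_not.mpr hvw2)
    · exact absurd (h1 ▸ hvw3) (ha_irr _)
    · exact absurd h2 hvwna
    · exact absurd ((hbmem _ _).mp h1).1 (not_not.mpr hvw3)
  have hsuw : s u₁ u₂ u₃ = s w₁ w₂ w₃ := hsuv.trans hsvw
  -- but the pair `u, w` has type `(a, b, a)`, contradicting conservativity
  rcases hcons u₁ u₂ u₃ w₁ w₂ w₃ with h | h | h <;>
    rcases h with ⟨h1, h2⟩ | ⟨h1, h2⟩ | ⟨h1, h2⟩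
  · exact absurd (h1 ▸ huw1) (ha_irr _)
  · exact absurd (hsuw ▸ h2) (ha_irr _)
  · exact absurd ((hbmem _ _).mp h1).1 (not_not.mpr huw1)
  · exact absurd h1 (((hbmem _ _).mp huw2).2 ∘ fun h => h)
  · exact absurd h1 (fun h => ((hbmem _ _).mp huw2).1 h)
  · exact absurd hsuw ((hbmem _ _).mp h2).2
  · exact absurd (h1 ▸ huw3) (ha_irr _)
  · exact absurd (hsuw ▸ h2) (ha_irr _)
  · exact absurd ((hbmem _ _).mp h1).1 (not_not.mpr huw3)
end
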